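/- Let p, q ≥ 1, let G be a split graph with clique C = {c_1,…,c_p} and independent set U = {u_1,…,u_q}, let G′ be the split reduction graph of G, and let φ be the bijection from C ∪ U to D ∪ W given by φ(c_i) = d_i and φ(u_j) = w_j. Then for every integer k ≥ 1 and all k-independent sets I and J of G, the sets I and J lie in the same connected component of the token-sliding reconfiguration graph TS_k(G) if and only if φ(I) and φ(J) lie in the same connected component of TS_k(G′). -/

import Mathlib

/-- An independent set of a graph, as a finset of pairwise non-adjacent vertices. -/
def IsIndepF {V : Type*} (H : SimpleGraph V) (I : Finset V) : Prop :=
  ∀ u ∈ I, ∀ v ∈ I, ¬ H.Adj u v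

/-- The token-sliding reconfiguration graph `TS_m(H)`. -/
def TSGraph {V : Type*} [DecidableEq V] (H : SimpleGraph V) (m : ℕ) :
    SimpleGraph {I : Finset V // I.card = m ∧ IsIndepF H I} where
  Adj I J := ∃ u v, J.1 \ I.1 = {u} ∧ I.1 \ J.1 = {v} ∧ H.Adj u v
  symm := ⟨by rintro I J ⟨u, v, h1, h2, h3⟩; exact ⟨v, u, h2, h1, h3.symm⟩⟩
  loopless := ⟨by
    rintro I ⟨u, v, h1, h2, h3⟩
    rw [Finset.sdiff_self] at h1
    exact (Finset.singleton_ne_empty u) h1.symm⟩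

/-- `I` and `J` lie in the same connected component of `TS_m(H)`; in particular both
are `m`-independent sets of `H`. -/
def TSSameComponent {V : Type*} [DecidableEq V] (H : SimpleGraph V) (m : ℕ)
    (I J : Finset V) : Prop :=
  ∃ (hI : I.card = m ∧ IsIndepF H I) (hJ : J.card = m ∧ IsIndepF H J),
    (TSGraph H m).Reachable ⟨I, hI⟩ ⟨J, hJ⟩

/-- Vertices of the split reduction graph. -/
inductive SVert (p q : ℕ) : Type where
  | d : Fin p → SVert p q
  | w : Fin q → SVert p q
  | s : Fin q → SVert p q
deriving DecidableEq

/-- The split reduction graph `G'` of a split graph `G` on `Fin p ⊕ Fin q`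
(`Sum.inl` is the clique `C`, `Sum.inr` the independent set `U`). -/
def splitRed (p q : ℕ) (G : SimpleGraph (Fin p ⊕ Fin q)) : SimpleGraph (SVert p q) :=
  SimpleGraph.fromRel (fun a b =>
    match a, b with
    | .d i, .d j => i ≠ j
    | .d i, .w j => G.Adj (Sum.inl i) (Sum.inr j)
    | .s _, .d _ => True
    | _, _ => False)

/-- The bijection `φ` from `C ∪ U` to `D ∪ W`, given by `φ(c_i) = d_i`, `φ(u_j) = w_j`. -/
def phi {p q : ℕ} : Fin p ⊕ Fin q → SVert p q
  | Sum.inl i => SVert.d i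
  | Sum.inr j => SVert.w j

section SplitHelpers

variable {p q : ℕ}

lemma phi_inj : Function.Injective (phi (p := p) (q := q)) := by
  intro x y h
  cases x <;> cases y <;> simp [phi] at h <;> simp [h]

lemma phi_ne_s (x : Fin p ⊕ Fin q) (i : Fin q) : phi x ≠ SVert.s i := by
  cases x <;> simp [phi]

variable (G : SimpleGraph (Fin p ⊕ Fin q))

lemma splitRed_adj_iff
    (hC : ∀ i j : Fin p, i ≠ j → G.Adj (Sum.inl i) (Sum.inl j))
    (hU : ∀ i j : Fin q, ¬ G.Adj (Sum.inr i) (Sum.inr j))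
    (x y : Fin p ⊕ Fin q) :
    G.Adj x y ↔ (splitRed p q G).Adj (phi x) (phi y) := by
  cases x with
  | inl i =>
    cases y with
    | inl j =>
      simp only [splitRed, SimpleGraph.fromRel_adj, phi]
      constructor
      · intro h
        have hij : i ≠ j := by rintro rfl; exact G.loopless.irrefl _ h
        exact ⟨by simpa using hij, Or.inl hij⟩
      · rintro ⟨hne, h | h⟩
        · exact hC i j h
        · exact hC i j (Ne.symm h)
    | inr j =>
      simp only [splitRed, SimpleGraph.fromRel_adj, phi]
      constructor
      · intro h; exact ⟨by simp, Or.inl h⟩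
      · rintro ⟨-, h | h⟩
        · exact h
        · exact h.elim
  | inr i =>
    cases y with
    | inl j =>
      simp only [splitRed, SimpleGraph.fromRel_adj, phi]
      constructor
      · intro h; exact ⟨by simp, Or.inr h.symm⟩
      · rintro ⟨-, h | h⟩
        · exact h.elim
        · exact h.symm
    | inr j =>
      simp only [splitRed, SimpleGraph.fromRel_adj, phi]
      exact ⟨fun h => (hU i j h).elim, by rintro ⟨-, h | h⟩ <;> exact h.elim⟩

lemma adj_d_s (j : Fin p) (i : Fin q) : (splitRed p q G).Adj (SVert.d j) (SVert.s i) := by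
  simp [splitRed, SimpleGraph.fromRel_adj]

lemma adj_to_s {u : SVert p q} {i : Fin q} (h : (splitRed p q G).Adj u (SVert.s i)) :
    ∃ j, u = SVert.d j := by
  cases u with
  | d j => exact ⟨j, rfl⟩
  | w t => simp [splitRed, SimpleGraph.fromRel_adj] at h
  | s t => simp [splitRed, SimpleGraph.fromRel_adj] at h

lemma adj_to_w {u : SVert p q} {t : Fin q} (h : (splitRed p q G).Adj u (SVert.w t)) :
    ∃ j, u = SVert.d j := by
  cases u with
  | d j => exact ⟨j, rfl⟩
  | w t' => simp [splitRed, SimpleGraph.fromRel_adj] at h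
  | s t' => simp [splitRed, SimpleGraph.fromRel_adj] at h

lemma slide_mems {α : Type*} [DecidableEq α] {B B' : Finset α} {u v : α}
    (h1 : B' \ B = {u}) (h2 : B \ B' = {v}) :
    u ∈ B' ∧ u ∉ B ∧ v ∈ B ∧ v ∉ B' := by
  have hu : u ∈ B' \ B := h1 ▸ Finset.mem_singleton_self u
  have hv : v ∈ B \ B' := h2 ▸ Finset.mem_singleton_self v
  simp only [Finset.mem_sdiff] at hu hv
  exact ⟨hu.1, hu.2, hv.1, hv.2⟩

lemma slide_eq {α : Type*} [DecidableEq α] {B B' : Finset α} {u v : α}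
    (h1 : B' \ B = {u}) (h2 : B \ B' = {v}) : B' = insert u (B.erase v) := by
  obtain ⟨huB', huB, hvB, hvB'⟩ := slide_mems h1 h2
  ext x
  simp only [Finset.mem_insert, Finset.mem_erase]
  constructor
  · intro hx
    by_cases hxB : x ∈ B
    · right
      refine ⟨?_, hxB⟩
      rintro rfl; exact hvB' hx
    · left
      have : x ∈ B' \ B := Finset.mem_sdiff.mpr ⟨hx, hxB⟩
      rw [h1] at this; exact Finset.mem_singleton.mp this
  · rintro (rfl | ⟨hne, hxB⟩)
    · exact huB'
    · by_contra hx
      have : x ∈ B \ B' := Finset.mem_sdiff.mpr ⟨hxB, hx⟩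
      rw [h2] at this; exact hne (Finset.mem_singleton.mp this)

lemma slide_sdiffs {α : Type*} [DecidableEq α] {A : Finset α} {x y : α}
    (hx : x ∉ A) (hy : y ∈ A) :
    (insert x (A.erase y)) \ A = {x} ∧ A \ (insert x (A.erase y)) = {y} := by
  constructor <;> ext a <;>
    simp only [Finset.mem_sdiff, Finset.mem_insert, Finset.mem_erase, Finset.mem_singleton]
  · constructor
    · rintro ⟨rfl | ⟨hne, ha⟩, hnA⟩
      · rfl
      · exact absurd ha hnA
    · rintro rfl; exact ⟨Or.inl rfl, hx⟩
  · constructor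
    · rintro ⟨ha, hno⟩
      push_neg at hno
      obtain ⟨h1, h2⟩ := hno
      by_contra hne
      exact (h2 hne) ha
    · rintro rfl
      refine ⟨hy, ?_⟩
      push_neg
      refine ⟨fun h => hx (h ▸ hy), fun h => absurd rfl h⟩

/-- Correspondence between an independent set of `G` and one of `G'`. -/
def Corr (A : Finset (Fin p ⊕ Fin q)) (B : Finset (SVert p q)) : Prop :=
  B = A.image phi ∨
    ∃ (i : Fin q) (c : Fin p), Sum.inl c ∈ A ∧
      B = insert (SVert.s i) ((A.erase (Sum.inl c)).image phi)

lemma props_of_image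
    (hC : ∀ i j : Fin p, i ≠ j → G.Adj (Sum.inl i) (Sum.inl j))
    (hU : ∀ i j : Fin q, ¬ G.Adj (Sum.inr i) (Sum.inr j))
    {A : Finset (Fin p ⊕ Fin q)} {k : ℕ}
    (h : (A.image phi).card = k ∧ IsIndepF (splitRed p q G) (A.image phi)) :
    A.card = k ∧ IsIndepF G A := by
  refine ⟨by rw [← Finset.card_image_of_injective A phi_inj]; exact h.1, ?_⟩
  intro a ha b hb hab
  exact h.2 _ (Finset.mem_image_of_mem _ ha) _ (Finset.mem_image_of_mem _ hb)
    ((splitRed_adj_iff G hC hU a b).mp hab)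

lemma image_props
    (hC : ∀ i j : Fin p, i ≠ j → G.Adj (Sum.inl i) (Sum.inl j))
    (hU : ∀ i j : Fin q, ¬ G.Adj (Sum.inr i) (Sum.inr j))
    {A : Finset (Fin p ⊕ Fin q)} {k : ℕ}
    (h : A.card = k ∧ IsIndepF G A) :
    (A.image phi).card = k ∧ IsIndepF (splitRed p q G) (A.image phi) := by
  refine ⟨by rw [Finset.card_image_of_injective A phi_inj]; exact h.1, ?_⟩
  rintro a ha b hb hab
  rw [Finset.mem_image] at ha hb
  obtain ⟨x, hx, rfl⟩ := ha
  obtain ⟨y, hy, rfl⟩ := hb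
  exact h.2 x hx y hy ((splitRed_adj_iff G hC hU x y).mpr hab)

end SplitHelpers

section SplitMain

variable {p q : ℕ} (G : SimpleGraph (Fin p ⊕ Fin q))

/-- The homomorphism `TS_k(G) → TS_k(G')` induced by `φ`. -/
def TSHom (hC : ∀ i j : Fin p, i ≠ j → G.Adj (Sum.inl i) (Sum.inl j))
    (hU : ∀ i j : Fin q, ¬ G.Adj (Sum.inr i) (Sum.inr j)) (k : ℕ) :
    TSGraph G k →g TSGraph (splitRed p q G) k where
  toFun I := ⟨I.1.image phi, image_props G hC hU I.2⟩
  map_rel' := by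
    rintro I J ⟨u, v, h1, h2, h3⟩
    exact ⟨phi u, phi v,
      by rw [← Finset.image_sdiff _ _ phi_inj, h1, Finset.image_singleton],
      by rw [← Finset.image_sdiff _ _ phi_inj, h2, Finset.image_singleton],
      (splitRed_adj_iff G hC hU u v).mp h3⟩

lemma corr_step
    (hC : ∀ i j : Fin p, i ≠ j → G.Adj (Sum.inl i) (Sum.inl j))
    (hU : ∀ i j : Fin q, ¬ G.Adj (Sum.inr i) (Sum.inr j)) {k : ℕ}
    {B B' : {X : Finset (SVert p q) // X.card = k ∧ IsIndepF (splitRed p q G) X}}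
    (hadj : (TSGraph (splitRed p q G) k).Adj B B')
    {A : Finset (Fin p ⊕ Fin q)} (hA : A.card = k ∧ IsIndepF G A)
    (hcorr : Corr A B.1) :
    ∃ (A' : Finset (Fin p ⊕ Fin q)) (hA' : A'.card = k ∧ IsIndepF G A'),
      (TSGraph G k).Reachable ⟨A, hA⟩ ⟨A', hA'⟩ ∧ Corr A' B'.1 := by
  obtain ⟨u, v, h1, h2, hGadj⟩ := hadj
  obtain ⟨huB', huB, hvB, hvB'⟩ := slide_mems h1 h2
  have hB'eq : B'.1 = insert u (B.1.erase v) := slide_eq h1 h2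
  rcases hcorr with hB | ⟨i, c, hcA, hB⟩
  · -- `B = φ(A)`
    have hv' : v ∈ A.image phi := hB ▸ hvB
    rw [Finset.mem_image] at hv'
    obtain ⟨xv, hxvA, rfl⟩ := hv'
    by_cases hus : ∃ i, u = SVert.s i
    · -- the token moves onto a special vertex
      obtain ⟨i, rfl⟩ := hus
      obtain ⟨j, hj⟩ := adj_to_s G hGadj.symm
      have hxv : xv = Sum.inl j := by
        cases xv <;> simp only [phi] at hj <;> simp_all
      subst hxv
      refine ⟨A, hA, SimpleGraph.Reachable.refl _, Or.inr ⟨i, j, hxvA, ?_⟩⟩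
      rw [hB'eq, hB, Finset.image_erase phi_inj]
    · -- both endpoints of the slide lie in the range of `φ`
      have hux : ∃ xu, phi xu = u := by
        cases u with
        | d j => exact ⟨Sum.inl j, rfl⟩
        | w t => exact ⟨Sum.inr t, rfl⟩
        | s i => exact absurd ⟨i, rfl⟩ hus
      obtain ⟨xu, rfl⟩ := hux
      have hGxy : G.Adj xu xv := (splitRed_adj_iff G hC hU xu xv).mpr hGadj
      have hxuA : xu ∉ A := fun h => huB (hB ▸ Finset.mem_image_of_mem phi h)
      have himg : B'.1 = (insert xu (A.erase xv)).image phi := by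
        rw [hB'eq, hB, Finset.image_insert, Finset.image_erase phi_inj]
      have hA' : (insert xu (A.erase xv)).card = k ∧ IsIndepF G (insert xu (A.erase xv)) :=
        props_of_image G hC hU (himg ▸ B'.2)
      obtain ⟨hd1, hd2⟩ := slide_sdiffs hxuA hxvA
      exact ⟨_, hA', SimpleGraph.Adj.reachable ⟨xu, xv, hd1, hd2, hGxy⟩, Or.inl himg⟩
  · -- `B = {sᵢ} ∪ φ(A \ {c})`
    have hsX : SVert.s i ∉ (A.erase (Sum.inl c)).image phi := by
      intro h; rw [Finset.mem_image] at h
      obtain ⟨x, -, hx⟩ := h; exact phi_ne_s x i hx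
    have hv' : v = SVert.s i ∨ v ∈ (A.erase (Sum.inl c)).image phi := by
      rw [hB, Finset.mem_insert] at hvB; exact hvB
    rcases hv' with rfl | hvX
    · -- the special token moves back onto a clique vertex `d j`
      obtain ⟨j, rfl⟩ := adj_to_s G hGadj
      have hujA : Sum.inl j ∉ A.erase (Sum.inl c) := by
        intro h
        exact huB (hB ▸ Finset.mem_insert_of_mem (Finset.mem_image_of_mem phi h))
      have hB'img : B'.1 = insert (SVert.d j) ((A.erase (Sum.inl c)).image phi) := by
        rw [hB'eq, hB, Finset.erase_insert hsX]
      by_cases hjc : j = c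
      · subst hjc
        refine ⟨A, hA, SimpleGraph.Reachable.refl _, Or.inl ?_⟩
        rw [hB'img]
        show insert (phi (Sum.inl j)) ((A.erase (Sum.inl j)).image phi) = A.image phi
        rw [← Finset.image_insert, Finset.insert_erase hcA]
      · have hjA : Sum.inl j ∉ A := by
          intro h
          exact hujA (Finset.mem_erase.mpr ⟨by simpa using hjc, h⟩)
        have himg : B'.1 = (insert (Sum.inl j) (A.erase (Sum.inl c))).image phi := by
          rw [hB'img, Finset.image_insert]; rfl
        have hA' : _ ∧ IsIndepF G (insert (Sum.inl j) (A.erase (Sum.inl c))) :=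
          props_of_image G hC hU (himg ▸ B'.2)
        obtain ⟨hd1, hd2⟩ := slide_sdiffs hjA hcA
        exact ⟨_, hA', SimpleGraph.Adj.reachable
          ⟨Sum.inl j, Sum.inl c, hd1, hd2, hC j c hjc⟩, Or.inl himg⟩
    · -- impossible: a `w`-token cannot move while the special token is present
      exfalso
      rw [Finset.mem_image] at hvX
      obtain ⟨x, hxA, rfl⟩ := hvX
      have hxr : ∃ t, x = Sum.inr t := by
        rcases x with xc | t
        · exfalso
          have hne : xc ≠ c := by
            intro h; subst h; exact (Finset.mem_erase.mp hxA).1 rfl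
          exact hA.2 _ ((Finset.mem_erase.mp hxA).2) _ hcA (hC xc c hne)
        · exact ⟨t, rfl⟩
      obtain ⟨t, rfl⟩ := hxr
      obtain ⟨j, rfl⟩ := adj_to_w G hGadj
      have hsB' : SVert.s i ∈ B'.1 := by
        rw [hB'eq]
        refine Finset.mem_insert_of_mem (Finset.mem_erase.mpr ⟨by simp [phi], ?_⟩)
        rw [hB]; exact Finset.mem_insert_self _ _
      exact B'.2.2 _ huB' _ hsB' (adj_d_s G j i)

lemma corr_walk
    (hC : ∀ i j : Fin p, i ≠ j → G.Adj (Sum.inl i) (Sum.inl j))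
    (hU : ∀ i j : Fin q, ¬ G.Adj (Sum.inr i) (Sum.inr j)) {k : ℕ}
    {B B' : {X : Finset (SVert p q) // X.card = k ∧ IsIndepF (splitRed p q G) X}}
    (w : (TSGraph (splitRed p q G) k).Walk B B') :
    ∀ {A : Finset (Fin p ⊕ Fin q)} (hA : A.card = k ∧ IsIndepF G A), Corr A B.1 →
      ∃ (A' : Finset (Fin p ⊕ Fin q)) (hA' : A'.card = k ∧ IsIndepF G A'),
        (TSGraph G k).Reachable ⟨A, hA⟩ ⟨A', hA'⟩ ∧ Corr A' B'.1 := by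
  induction w with
  | nil => exact fun hA h => ⟨_, hA, SimpleGraph.Reachable.refl _, h⟩
  | cons hadj w ih =>
    intro A hA hcorr
    obtain ⟨A1, hA1, hr1, hc1⟩ := corr_step G hC hU hadj hA hcorr
    obtain ⟨A2, hA2, hr2, hc2⟩ := ih hA1 hc1
    exact ⟨A2, hA2, hr1.trans hr2, hc2⟩

end SplitMain

theorem splitReduction_reachability_correct
    (p q : ℕ) (hp : 1 ≤ p) (hq : 1 ≤ q) (G : SimpleGraph (Fin p ⊕ Fin q))
    (hC : ∀ i j : Fin p, i ≠ j → G.Adj (Sum.inl i) (Sum.inl j))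
    (hU : ∀ i j : Fin q, ¬ G.Adj (Sum.inr i) (Sum.inr j))
    (k : ℕ) (hk : 1 ≤ k) (I J : Finset (Fin p ⊕ Fin q))
    (hI : I.card = k ∧ IsIndepF G I) (hJ : J.card = k ∧ IsIndepF G J) :
    TSSameComponent G k I J ↔
      TSSameComponent (splitRed p q G) k (I.image phi) (J.image phi) := by
  constructor
  · rintro ⟨hI0, hJ0, hr⟩
    exact ⟨image_props G hC hU hI0, image_props G hC hU hJ0, hr.map (TSHom G hC hU k)⟩
  · rintro ⟨hI0, hJ0, hr⟩
    obtain ⟨w⟩ := hr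
    obtain ⟨A', hA', hreach, hcorr⟩ := corr_walk G hC hU w hI (Or.inl rfl)
    rcases hcorr with h | ⟨i, c, -, h⟩
    · have hAJ : J = A' := Finset.image_injective phi_inj h
      subst hAJ
      exact ⟨hI, hA', hreach⟩
    · exfalso
      have hmem : SVert.s i ∈ J.image phi := by
        show SVert.s i ∈ (⟨J.image phi, hJ0⟩ :
          {X : Finset (SVert p q) // X.card = k ∧ IsIndepF (splitRed p q G) X}).1
        rw [h]; exact Finset.mem_insert_self _ _
      rw [Finset.mem_image] at hmem
      obtain ⟨x, -, hx⟩ := hmem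
      exact phi_ne_s x i hx
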